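/- Let α ∈ [1/3, 1) ∪ {0}. Then for every finitely supported function u : ℕ₀ → ℝ with u(0) = 0 one has ∑_{n=1}^∞ |u(n) − u(n−1)|² n^α ≥ ((α−1)²/4) ∑_{n=1}^∞ |u(n)|² n^{α−2} + ∑_{k=3}^∞ b_k(α) ∑_{n=2}^∞ |u(n)|² n^{α−k}, where all the coefficients b_k(α) are non-negative. -/

import Mathlib

/-- The generalized binomial coefficient `binom(γ, k) = γ(γ−1)⋯(γ−k+1)/k!`. -/
noncomputable def genBinom (γ : ℝ) (k : ℕ) : ℝ :=
  (∏ i ∈ Finset.range k, (γ - i)) / (Nat.factorial k)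

/-- `b_k(α) = binom(α,k) − (−1)^k binom((1−α)/2, k) − binom((1+α)/2, k)`. -/
noncomputable def bCoef (α : ℝ) (k : ℕ) : ℝ :=
  genBinom α k - (-1) ^ k * genBinom ((1 - α) / 2) k - genBinom ((1 + α) / 2) k

set_option maxHeartbeats 1000000
open Finset


open Finset

/-- `P x j = x * ∏_{i<j} (i+1-x)`. -/
noncomputable def Pprod (x : ℝ) (j : ℕ) : ℝ := x * ∏ i ∈ range j, ((i : ℝ) + 1 - x)

lemma prod_sign (x : ℝ) (j : ℕ) :
    (∏ i ∈ range (j + 1), (x - i)) = (-1) ^ j * Pprod x j := by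
  induction j with
  | zero => simp [Pprod]
  | succ j ih =>
    rw [prod_range_succ, ih, Pprod, Pprod, prod_range_succ]
    push_cast
    ring

lemma genBinom_succ_eq (x : ℝ) (j : ℕ) :
    genBinom x (j + 1) = (-1) ^ j * Pprod x j / (Nat.factorial (j + 1)) := by
  rw [genBinom, prod_sign]

lemma bCoef_succ_eq (α : ℝ) (j : ℕ) :
    bCoef α (j + 1) = ((-1) ^ j * (Pprod α j - Pprod ((1 + α) / 2) j)
      + Pprod ((1 - α) / 2) j) / (Nat.factorial (j + 1)) := by
  rw [bCoef, genBinom_succ_eq, genBinom_succ_eq, genBinom_succ_eq]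
  rw [pow_succ]
  ring_nf
  rw [show (-1:ℝ)^(j*2) = 1 by rw [mul_comm, pow_mul]; norm_num]
  ring


section Pos
variable {q : ℝ}

lemma Pprod_nonneg (hx0 : 0 ≤ q) (hx1 : q ≤ 1) (j : ℕ) : 0 ≤ Pprod q j := by
  apply mul_nonneg hx0
  apply prod_nonneg
  intro i _
  have : (0:ℝ) ≤ i := Nat.cast_nonneg i
  linarith

lemma Pp_le_Pq (hq0 : 0 ≤ q) (hq : q ≤ 1/2) (j : ℕ) (hj : 1 ≤ j) :
    Pprod (1 - q) j ≤ Pprod q j := by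
  obtain ⟨j', rfl⟩ := Nat.exists_eq_add_of_le' hj
  rw [Pprod, Pprod, prod_range_succ', prod_range_succ']
  simp only [Nat.cast_zero]
  push_cast
  have h1 : (∏ i ∈ range j', ((i:ℝ) + 1 + 1 - (1 - q))) ≤
      ∏ i ∈ range j', ((i:ℝ) + 1 + 1 - q) := by
    apply prod_le_prod
    · intro i _; have : (0:ℝ) ≤ i := Nat.cast_nonneg i; linarith
    · intro i _; push_cast; linarith
  have h2 : (0:ℝ) ≤ ∏ i ∈ range j', ((i:ℝ) + 1 + 1 - (1 - q)) := by
    apply prod_nonneg; intro i _; have : (0:ℝ) ≤ i := Nat.cast_nonneg i; linarith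
  calc (1 - q) * ((∏ i ∈ range j', ((i:ℝ) + 1 + 1 - (1 - q))) * (0 + 1 - (1 - q)))
      = (q * (1 - q)) * ∏ i ∈ range j', ((i:ℝ) + 1 + 1 - (1 - q)) := by ring
    _ ≤ (q * (1 - q)) * ∏ i ∈ range j', ((i:ℝ) + 1 + 1 - q) := by
        apply mul_le_mul_of_nonneg_left h1 (by nlinarith)
    _ = q * ((∏ i ∈ range j', ((i:ℝ) + 1 + 1 - q)) * (0 + 1 - q)) := by ring

lemma key5 (hq0 : 0 ≤ q) (hq : q ≤ 1/3) :
    2 * (1 - 2*q) * (∏ i ∈ range 5, ((i:ℝ) + 1 + 2*q)) ≤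
      ∏ i ∈ range 6, ((i:ℝ) + 1 - q) := by
  have h2 : q^2 ≤ q * (1/3) := by
    rw [sq]; exact mul_le_mul_of_nonneg_left hq hq0
  have h3 : q^3 ≤ q * (1/9) := by
    calc q^3 = q^2 * q := by ring
      _ ≤ (q * (1/3)) * (1/3) := by
          apply mul_le_mul h2 hq (by linarith) (by positivity)
      _ = q * (1/9) := by ring
  have h4 : q^4 ≤ q * (1/27) := by
    calc q^4 = q^3 * q := by ring
      _ ≤ (q * (1/9)) * (1/3) := by
          apply mul_le_mul h3 hq (by linarith) (by positivity)
      _ = q * (1/27) := by ring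
  have h5 : q^5 ≤ q * (1/81) := by
    calc q^5 = q^4 * q := by ring
      _ ≤ (q * (1/27)) * (1/3) := by
          apply mul_le_mul h4 hq (by linarith) (by positivity)
      _ = q * (1/81) := by ring
  have hq2 : (0:ℝ) ≤ q^2 := sq_nonneg q
  have hq3 : (0:ℝ) ≤ q^3 := by positivity
  have hq4 : (0:ℝ) ≤ q^4 := by positivity
  have hq5 : (0:ℝ) ≤ q^5 := by positivity
  have hE : 0 ≤ 480 - 940*q - 804*q^2 - 907*q^3 - 306*q^4 - 43*q^5 := by linarith
  have h13 : (0:ℝ) ≤ 1 - 3*q := by linarith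
  have key := mul_nonneg h13 hE
  simp only [prod_range_succ, prod_range_zero]
  push_cast
  nlinarith [key]

lemma keyB (hq0 : 0 ≤ q) (hq : q ≤ 1/3) (m : ℕ) (hm : 5 ≤ m) :
    2 * (1 - 2*q) * (∏ i ∈ range m, ((i:ℝ) + 1 + 2*q)) ≤
      ∏ i ∈ range (m+1), ((i:ℝ) + 1 - q) := by
  induction m, hm using Nat.le_induction with
  | base => exact key5 hq0 hq
  | succ m hm ih =>
    rw [prod_range_succ, prod_range_succ (n := m + 1)]
    have hA : (0:ℝ) ≤ 2 * (1 - 2*q) * (∏ i ∈ range m, ((i:ℝ) + 1 + 2*q)) := by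
      apply mul_nonneg (by linarith)
      apply prod_nonneg; intro i _; have : (0:ℝ) ≤ i := Nat.cast_nonneg i; linarith
    have hf : ((m:ℝ) + 1 + 2*q) ≤ ((m:ℝ) + 1 + 1 - q) := by push_cast; linarith
    have hf0 : (0:ℝ) ≤ (m:ℝ) + 1 + 2*q := by positivity
    calc 2 * (1 - 2*q) * ((∏ i ∈ range m, ((i:ℝ) + 1 + 2*q)) * ((m:ℝ) + 1 + 2*q))
        = (2 * (1 - 2*q) * ∏ i ∈ range m, ((i:ℝ) + 1 + 2*q)) * ((m:ℝ) + 1 + 2*q) := by ring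
      _ ≤ (∏ i ∈ range (m+1), ((i:ℝ) + 1 - q)) * ((m:ℝ) + 1 + 2*q) := by
          exact mul_le_mul_of_nonneg_right ih hf0
      _ ≤ (∏ i ∈ range (m+1), ((i:ℝ) + 1 - q)) * ((m:ℝ) + 1 + 1 - q) := by
          apply mul_le_mul_of_nonneg_left hf
          apply prod_nonneg; intro i _; have : (0:ℝ) ≤ i := Nat.cast_nonneg i; linarith
      _ = (∏ x ∈ range (m + 1), ((x:ℝ) + 1 - q)) * (↑(m + 1) + 1 - q) := by push_cast; ring

/-- Even-k key inequality: `Pα ≤ Pq + Pp` for `m = j-1 ≥ 1`. -/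
lemma keyMain (hq0 : 0 ≤ q) (hq : q ≤ 1/3) (m : ℕ) (hm : 1 ≤ m) :
    2 * (1 - 2*q) * (∏ i ∈ range m, ((i:ℝ) + 1 + 2*q)) ≤
      (∏ i ∈ range (m+1), ((i:ℝ) + 1 - q)) + (1 - q) * ∏ i ∈ range m, ((i:ℝ) + 1 + q) := by
  have hC : (0:ℝ) ≤ (1 - q) * ∏ i ∈ range m, ((i:ℝ) + 1 + q) := by
    apply mul_nonneg (by linarith)
    apply prod_nonneg; intro i _; have : (0:ℝ) ≤ i := Nat.cast_nonneg i; linarith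
  by_cases h5 : 5 ≤ m
  · linarith [keyB hq0 hq m h5]
  · interval_cases m <;>
      (simp only [prod_range_succ, prod_range_zero] <;> push_cast <;>
        nlinarith [sq_nonneg q, mul_nonneg hq0 hq0, mul_nonneg (mul_nonneg hq0 hq0) hq0,
          mul_nonneg (mul_nonneg (mul_nonneg hq0 hq0) hq0) hq0])
end Pos

theorem bCoef_nonneg {α : ℝ} (hα : α ∈ Set.Ico (1 / 3 : ℝ) 1 ∪ {0}) :
    ∀ k : ℕ, 3 ≤ k → 0 ≤ bCoef α k := by
  intro k hk
  obtain ⟨j, rfl⟩ : ∃ j, k = j + 1 := ⟨k - 1, by omega⟩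
  have hj : 2 ≤ j := by omega
  rw [bCoef_succ_eq]
  apply div_nonneg _ (by positivity)
  rcases hα with hα | hα
  · -- 1/3 ≤ α < 1
    obtain ⟨hα1, hα2⟩ := hα
    set q := (1 - α) / 2 with hqdef
    have hq0 : 0 < q := by rw [hqdef]; linarith
    have hq3 : q ≤ 1/3 := by rw [hqdef]; linarith
    have hpq : (1 + α) / 2 = 1 - q := by rw [hqdef]; ring
    rcases Nat.even_or_odd j with hpar | hpar
    · rw [hpar.neg_one_pow, hpq]
      have h1 := Pp_le_Pq hq0.le (by linarith) j (by omega)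
      have h2 := Pprod_nonneg (by linarith : (0:ℝ) ≤ α) (by linarith) j
      linarith
    · rw [hpar.neg_one_pow, hpq]
      obtain ⟨m, rfl⟩ : ∃ m, j = m + 1 := ⟨j - 1, by omega⟩
      have hm : 1 ≤ m := by omega
      have key := keyMain hq0.le hq3 m hm
      have hαq : α = 1 - 2*q := by rw [hqdef]; ring
      have e1 : Pprod α (m+1) = 2*q*(1 - 2*q) * ∏ i ∈ range m, ((i:ℝ) + 1 + 2*q) := by
        rw [Pprod, prod_range_succ']
        rw [prod_congr rfl (fun i _ => by push_cast; rw [hαq]; ring :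
          ∀ i ∈ range m, ((i+1 : ℕ):ℝ) + 1 - α = (i:ℝ) + 1 + 2*q)]
        rw [hαq]; push_cast; ring
      have e2 : Pprod q (m+1) = q * ∏ i ∈ range (m+1), ((i:ℝ) + 1 - q) := rfl
      have e3 : Pprod (1-q) (m+1) = q * ((1 - q) * ∏ i ∈ range m, ((i:ℝ) + 1 + q)) := by
        rw [Pprod, prod_range_succ']
        rw [prod_congr rfl (fun i _ => by push_cast; ring :
          ∀ i ∈ range m, ((i+1 : ℕ):ℝ) + 1 - (1-q) = (i:ℝ) + 1 + q)]
        push_cast; ring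
      rw [e1, e2, e3]
      nlinarith [mul_le_mul_of_nonneg_left key hq0.le]
  · -- α = 0
    simp only [Set.mem_singleton_iff] at hα
    subst hα
    norm_num
    have h0 : Pprod 0 j = 0 := by rw [Pprod]; ring
    have hP : 0 ≤ Pprod (1/2 : ℝ) j := Pprod_nonneg (by norm_num) (by norm_num) j
    rcases Nat.even_or_odd j with hpar | hpar
    · rw [hpar.neg_one_pow, h0]; linarith
    · rw [hpar.neg_one_pow, h0]; linarith

section Taylor

lemma genBinom_zero' (γ : ℝ) : genBinom γ 0 = 1 := by simp [genBinom]

lemma genBinom_succ_mul (γ : ℝ) (k : ℕ) :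
    ((k:ℝ) + 1) * genBinom γ (k + 1) = γ * genBinom (γ - 1) k := by
  have h : (∏ i ∈ range (k+1), (γ - i)) = γ * ∏ i ∈ range k, ((γ - 1) - i) := by
    rw [prod_range_succ']
    rw [prod_congr rfl (fun i _ => by push_cast; ring :
      ∀ i ∈ range k, (γ - ((i+1 : ℕ):ℝ)) = (γ - 1) - i)]
    push_cast; ring
  rw [genBinom, genBinom, h, Nat.factorial_succ]
  have hk : ((k:ℝ) + 1) ≠ 0 := by positivity
  have hf : ((Nat.factorial k : ℝ)) ≠ 0 := by positivity
  push_cast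
  field_simp

lemma hasDerivAt_R (γ : ℝ) (K : ℕ) {x : ℝ} (hx : -1 < x) :
    HasDerivAt (fun y => (1 + y) ^ γ - ∑ k ∈ range (K+1), genBinom γ k * y ^ k)
      (γ * ((1 + x) ^ (γ-1) - ∑ k ∈ range K, genBinom (γ-1) k * x ^ k)) x := by
  have h1 : HasDerivAt (fun y : ℝ => (1 + y) ^ γ) (γ * (1 + x) ^ (γ - 1)) x := by
    have hd := Real.hasDerivAt_rpow_const (x := 1 + x) (p := γ) (Or.inl (by linarith))
    have hc : HasDerivAt (fun y : ℝ => 1 + y) 1 x := (hasDerivAt_id x).const_add 1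
    simpa [mul_comm, Function.comp_def] using hd.comp x hc
  have h2 : HasDerivAt (fun y : ℝ => ∑ k ∈ range (K+1), genBinom γ k * y ^ k)
      (∑ k ∈ range (K+1), genBinom γ k * ((k:ℝ) * x ^ (k-1))) x := by
    apply HasDerivAt.fun_sum
    intro k _
    exact (hasDerivAt_pow k x).const_mul _
  have h3 : (∑ k ∈ range (K+1), genBinom γ k * ((k:ℝ) * x ^ (k-1)))
      = γ * ∑ k ∈ range K, genBinom (γ-1) k * x ^ k := by
    rw [Finset.sum_range_succ', Finset.mul_sum]
    simp only [Nat.cast_zero, zero_mul, mul_zero, add_zero]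
    apply Finset.sum_congr rfl
    intro k _
    have hb := genBinom_succ_mul γ k
    push_cast
    calc genBinom γ (k+1) * (((k:ℝ)+1) * x ^ (k+1-1))
        = (((k:ℝ)+1) * genBinom γ (k+1)) * x ^ k := by norm_num; ring
      _ = γ * (genBinom (γ-1) k * x ^ k) := by rw [hb]; ring
  have := h1.sub h2
  rw [h3] at this
  rw [mul_sub]
  exact this

lemma R_zero (γ : ℝ) (K : ℕ) :
    (1 + 0:ℝ)^γ - ∑ k ∈ range (K+1), genBinom γ k * (0:ℝ)^k = 0 := by
  rw [Finset.sum_range_succ']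
  simp [genBinom_zero', Real.one_rpow]

lemma ge_zero_of_deriv {f f' : ℝ → ℝ} (hd : ∀ y : ℝ, -1 < y → HasDerivAt f (f' y) y)
    (hf0 : f 0 = 0) (hp : ∀ y, 0 < y → 0 ≤ f' y) {x : ℝ} (hx : 0 < x) : 0 ≤ f x := by
  have hmono : MonotoneOn f (Set.Icc 0 x) := by
    apply monotoneOn_of_deriv_nonneg (convex_Icc 0 x)
    · intro y hy
      exact (hd y (by linarith [hy.1])).continuousAt.continuousWithinAt
    · intro y hy
      rw [interior_Icc] at hy
      exact (hd y (by linarith [hy.1.le])).differentiableAt.differentiableWithinAt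
    · intro y hy
      rw [interior_Icc] at hy
      rw [(hd y (by linarith [hy.1.le])).deriv]
      exact hp y hy.1
  have := hmono (Set.left_mem_Icc.2 hx.le) (Set.right_mem_Icc.2 hx.le) hx.le
  rwa [hf0] at this

lemma ge_zero_of_deriv_neg {f f' : ℝ → ℝ} (hd : ∀ y : ℝ, -1 < y → HasDerivAt f (f' y) y)
    (hf0 : f 0 = 0) (hp : ∀ y, -1 < y → y < 0 → f' y ≤ 0) {x : ℝ} (hx1 : -1 < x)
    (hx : x < 0) : 0 ≤ f x := by
  have hmono : AntitoneOn f (Set.Icc x 0) := by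
    apply antitoneOn_of_deriv_nonpos (convex_Icc x 0)
    · intro y hy
      exact (hd y (by linarith [hy.1])).continuousAt.continuousWithinAt
    · intro y hy
      rw [interior_Icc] at hy
      exact (hd y (by linarith [hy.1])).differentiableAt.differentiableWithinAt
    · intro y hy
      rw [interior_Icc] at hy
      rw [(hd y (by linarith [hy.1])).deriv]
      exact hp y (by linarith [hy.1]) hy.2
  have := hmono (Set.left_mem_Icc.2 hx.le) (Set.right_mem_Icc.2 hx.le) hx.le
  rwa [hf0] at this

lemma taylor_sign_pos : ∀ (K : ℕ) (γ : ℝ) {x : ℝ}, 0 < x →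
    0 ≤ (∏ i ∈ range (K+1), (γ - i)) *
      ((1 + x) ^ γ - ∑ k ∈ range (K+1), genBinom γ k * x ^ k) := by
  intro K
  induction K with
  | zero =>
    intro γ x hx
    apply ge_zero_of_deriv (f' := fun y =>
      (∏ i ∈ range 1, (γ - i)) * (γ * ((1 + y) ^ (γ-1) - ∑ k ∈ range 0, genBinom (γ-1) k * y ^ k)))
      (fun y hy => (hasDerivAt_R γ 0 hy).const_mul _)
      (by rw [R_zero]; ring) _ hx
    intro y hy
    simp only [prod_range_one, Nat.cast_zero, sub_zero, range_zero, sum_empty]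
    have h1 : (0:ℝ) ≤ (1 + y) ^ (γ-1) := Real.rpow_nonneg (by linarith) _
    nlinarith [sq_nonneg γ]
  | succ K ih =>
    intro γ x hx
    have hc : (∏ i ∈ range (K+2), (γ - i)) = γ * ∏ i ∈ range (K+1), ((γ-1) - i) := by
      rw [prod_range_succ']
      rw [prod_congr rfl (fun i _ => by push_cast; ring :
        ∀ i ∈ range (K+1), (γ - ((i+1 : ℕ):ℝ)) = (γ - 1) - i)]
      push_cast; ring
    apply ge_zero_of_deriv (f' := fun y =>
      (∏ i ∈ range (K+2), (γ - i)) *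
        (γ * ((1 + y) ^ (γ-1) - ∑ k ∈ range (K+1), genBinom (γ-1) k * y ^ k)))
      (fun y hy => (hasDerivAt_R γ (K+1) hy).const_mul _)
      (by rw [R_zero]; ring) _ hx
    intro y hy
    have hih := ih (γ - 1) hy
    calc (0:ℝ) ≤ γ^2 * ((∏ i ∈ range (K+1), ((γ-1) - i)) *
          ((1 + y) ^ (γ-1) - ∑ k ∈ range (K+1), genBinom (γ-1) k * y ^ k)) :=
        mul_nonneg (sq_nonneg γ) hih
      _ = (∏ i ∈ range (K+2), (γ - i)) *
          (γ * ((1 + y) ^ (γ-1) - ∑ k ∈ range (K+1), genBinom (γ-1) k * y ^ k)) := by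
        rw [hc]; ring

lemma taylor_sign_neg : ∀ (K : ℕ) (γ : ℝ) {x : ℝ}, -1 < x → x < 0 →
    0 ≤ (-1:ℝ)^(K+1) * (∏ i ∈ range (K+1), (γ - i)) *
      ((1 + x) ^ γ - ∑ k ∈ range (K+1), genBinom γ k * x ^ k) := by
  intro K
  induction K with
  | zero =>
    intro γ x hx1 hx
    apply ge_zero_of_deriv_neg (f' := fun y =>
      (-1:ℝ)^1 * (∏ i ∈ range 1, (γ - i)) *
        (γ * ((1 + y) ^ (γ-1) - ∑ k ∈ range 0, genBinom (γ-1) k * y ^ k)))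
      (fun y hy => (hasDerivAt_R γ 0 hy).const_mul _)
      (by rw [R_zero]; ring) _ hx1 hx
    intro y hy1 hy2
    simp only [prod_range_one, Nat.cast_zero, sub_zero, range_zero, sum_empty, pow_one]
    have h1 : (0:ℝ) ≤ (1 + y) ^ (γ-1) := Real.rpow_nonneg (by linarith) _
    nlinarith [sq_nonneg γ]
  | succ K ih =>
    intro γ x hx1 hx
    have hc : (∏ i ∈ range (K+2), (γ - i)) = γ * ∏ i ∈ range (K+1), ((γ-1) - i) := by
      rw [prod_range_succ']
      rw [prod_congr rfl (fun i _ => by push_cast; ring :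
        ∀ i ∈ range (K+1), (γ - ((i+1 : ℕ):ℝ)) = (γ - 1) - i)]
      push_cast; ring
    apply ge_zero_of_deriv_neg (f' := fun y =>
      (-1:ℝ)^(K+2) * (∏ i ∈ range (K+2), (γ - i)) *
        (γ * ((1 + y) ^ (γ-1) - ∑ k ∈ range (K+1), genBinom (γ-1) k * y ^ k)))
      (fun y hy => (hasDerivAt_R γ (K+1) hy).const_mul _)
      (by rw [R_zero]; ring) _ hx1 hx
    intro y hy1 hy2
    have hih := ih (γ - 1) hy1 hy2
    have : (-1:ℝ)^(K+2) * (∏ i ∈ range (K+2), (γ - i)) *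
        (γ * ((1 + y) ^ (γ-1) - ∑ k ∈ range (K+1), genBinom (γ-1) k * y ^ k))
        = -(γ^2 * ((-1:ℝ)^(K+1) * (∏ i ∈ range (K+1), ((γ-1) - i)) *
          ((1 + y) ^ (γ-1) - ∑ k ∈ range (K+1), genBinom (γ-1) k * y ^ k))) := by
      rw [hc]; ring
    rw [this]
    simp only [neg_nonpos]
    exact mul_nonneg (sq_nonneg γ) hih

end Taylor

section Cors
variable {γ x : ℝ}

lemma Pprod_pos (h0 : 0 < γ) (h1 : γ < 1) (j : ℕ) : 0 < Pprod γ j := by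
  apply mul_pos h0
  apply prod_pos
  intro i _
  have : (0:ℝ) ≤ i := Nat.cast_nonneg i
  linarith

lemma cor_even (h0 : 0 < γ) (h1 : γ < 1) (hx : 0 < x) {J : ℕ} (hJ : Even J) :
    ∑ k ∈ range (J+1), genBinom γ k * x ^ k ≤ (1 + x) ^ γ := by
  have hts := taylor_sign_pos J γ hx
  rw [prod_sign, hJ.neg_one_pow, one_mul] at hts
  have hc := Pprod_pos h0 h1 J
  nlinarith [hts, hc]

lemma cor_odd (h0 : 0 < γ) (h1 : γ < 1) (hx : 0 < x) {J : ℕ} (hJ : Odd J) :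
    (1 + x) ^ γ ≤ ∑ k ∈ range (J+1), genBinom γ k * x ^ k := by
  have hts := taylor_sign_pos J γ hx
  rw [prod_sign, hJ.neg_one_pow] at hts
  have hc := Pprod_pos h0 h1 J
  nlinarith [hts, hc]

lemma cor_negx (h0 : 0 < γ) (h1 : γ < 1) (hx0 : 0 < x) (hx1 : x < 1) (J : ℕ) :
    (1 - x) ^ γ ≤ ∑ k ∈ range (J+1), genBinom γ k * (-x) ^ k := by
  have hts := taylor_sign_neg J γ (x := -x) (by linarith) (by linarith)
  rw [prod_sign] at hts
  have hc := Pprod_pos h0 h1 J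
  have hee : (-1:ℝ)^(J+1) * ((-1:ℝ)^J * Pprod γ J) = -Pprod γ J := by
    calc (-1:ℝ)^(J+1) * ((-1:ℝ)^J * Pprod γ J) = ((-1:ℝ)^(J+1+J)) * Pprod γ J := by
          rw [pow_add]; ring
      _ = -Pprod γ J := by rw [Odd.neg_one_pow (n := J+1+J) ⟨J, by omega⟩]; ring
  rw [hee, show (1:ℝ) + -x = 1 - x from by ring] at hts
  nlinarith [hts, hc]
end Cors

section LowOrder
lemma genBinom_zero (γ : ℝ) : genBinom γ 0 = 1 := by simp [genBinom]
lemma genBinom_of_zero {k : ℕ} (hk : 1 ≤ k) : genBinom 0 k = 0 := by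
  rw [genBinom]
  rw [Finset.prod_eq_zero (Finset.mem_range.2 (by omega : 0 < k)) (by norm_num)]
  simp

lemma bCoef_zero (α : ℝ) : bCoef α 0 = -1 := by
  simp [bCoef, genBinom]

lemma bCoef_one (α : ℝ) : bCoef α 1 = 0 := by
  simp [bCoef, genBinom]
  ring

lemma bCoef_two (α : ℝ) : bCoef α 2 = ((1-α)/2)^2 := by
  have h : ∀ γ : ℝ, genBinom γ 2 = γ * (γ - 1) / 2 := by
    intro γ
    rw [genBinom]
    rw [show range 2 = {0, 1} from rfl]
    norm_num [Nat.factorial]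
  simp only [bCoef, h]
  norm_num
  ring
end LowOrder

lemma core_series {α x : ℝ} (hα : α ∈ Set.Ico (1 / 3 : ℝ) 1 ∪ {0})
    (hx0 : 0 < x) (hx1 : x < 1) (K : ℕ) :
    ∑ k ∈ range K, bCoef α (k+3) * x^(k+3) ≤
      (1 + (1+x)^α - (1-x)^((1-α)/2) - (1+x)^((1+α)/2)) - ((1-α)/2)^2 * x^2 := by
  have hα01 : 0 ≤ α ∧ α < 1 := by
    rcases hα with h | h
    · exact ⟨by linarith [h.1], h.2⟩
    · simp only [Set.mem_singleton_iff] at h; subst h; norm_num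
  obtain ⟨hα0, hα1⟩ := hα01
  set q : ℝ := (1 - α) / 2 with hqdef
  set p : ℝ := (1 + α) / 2 with hpdef
  have hq0 : 0 < q := by rw [hqdef]; linarith
  have hq2 : q ≤ 1/2 := by rw [hqdef]; linarith
  have hp0 : 0 < p := by rw [hpdef]; linarith
  have hp1 : p < 1 := by rw [hpdef]; linarith
  set N : ℕ := 2*K + 2 with hNdef
  have hNeven : Even N := ⟨K+1, by omega⟩
  -- step 1 : enlarge sum
  have h1 : ∑ k ∈ range K, bCoef α (k+3) * x^(k+3) ≤
      ∑ k ∈ range (2*K), bCoef α (k+3) * x^(k+3) := by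
    apply sum_le_sum_of_subset_of_nonneg (range_subset_range.2 (by omega))
    intro k _ _
    exact mul_nonneg (bCoef_nonneg hα (k+3) (by omega)) (by positivity)
  -- step 2 : split
  have h2 : ∑ k ∈ range (N+1), bCoef α k * x^k =
      -1 + q^2 * x^2 + ∑ k ∈ range (2*K), bCoef α (k+3) * x^(k+3) := by
    rw [show N + 1 = 3 + 2*K from by omega]
    rw [Finset.sum_range_add]
    have h3 : ∑ k ∈ range 3, bCoef α k * x^k = -1 + q^2 * x^2 := by
      rw [show range 3 = {0, 1, 2} from rfl]
      rw [Finset.sum_insert (by decide), Finset.sum_insert (by decide), Finset.sum_singleton]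
      rw [bCoef_zero, bCoef_one, bCoef_two]
      rw [hqdef]
      ring
    rw [h3]
    congr 1
    apply Finset.sum_congr rfl
    intro k _
    rw [add_comm 3 k]
  -- step 3 : three series bounds
  have hga : ∑ k ∈ range (N+1), genBinom α k * x^k ≤ (1+x)^α := by
    rcases eq_or_lt_of_le hα0 with h | h
    · have : ∑ k ∈ range (N+1), genBinom α k * x^k = 1 := by
        rw [← h]
        rw [Finset.sum_eq_single 0]
        · simp [genBinom_zero]
        · intro b _ hb
          rw [genBinom_of_zero (by omega)]
          ring
        · intro h'; simp at h'
      rw [this, ← h, Real.rpow_zero]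
    · exact cor_even h hα1 hx0 hNeven
  have hgq : (1-x)^q + Pprod q N * x^(N+1) / (Nat.factorial (N+1)) ≤
      ∑ k ∈ range (N+1), genBinom q k * (-x)^k := by
    have hcn := cor_negx hq0 (by linarith) hx0 hx1 (N+1)
    rw [Finset.sum_range_succ] at hcn
    have hgb : genBinom q (N+1) = Pprod q N / (Nat.factorial (N+1)) := by
      rw [genBinom_succ_eq, hNeven.neg_one_pow, one_mul]
    have hnp : (-x : ℝ)^(N+1) = -x^(N+1) := Odd.neg_pow (by exact hNeven.add_one) x
    rw [hgb, hnp] at hcn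
    have he : Pprod q N / (Nat.factorial (N+1) : ℝ) * -(x^(N+1))
        = -(Pprod q N * x^(N+1) / (Nat.factorial (N+1) : ℝ)) := by ring
    rw [he] at hcn
    linarith [hcn]
  have hgp : (1+x)^p - Pprod p N * x^(N+1) / (Nat.factorial (N+1)) ≤
      ∑ k ∈ range (N+1), genBinom p k * x^k := by
    have hco := cor_odd hp0 hp1 hx0 (J := N+1) (hNeven.add_one)
    rw [Finset.sum_range_succ] at hco
    have hgb : genBinom p (N+1) = Pprod p N / (Nat.factorial (N+1)) := by
      rw [genBinom_succ_eq, hNeven.neg_one_pow, one_mul]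
    rw [hgb] at hco
    have he : Pprod p N / (Nat.factorial (N+1) : ℝ) * x^(N+1)
        = Pprod p N * x^(N+1) / (Nat.factorial (N+1) : ℝ) := by ring
    rw [he] at hco
    linarith [hco]
  have hPpq : Pprod p N * x^(N+1) / (Nat.factorial (N+1)) ≤
      Pprod q N * x^(N+1) / (Nat.factorial (N+1)) := by
    have hle : Pprod p N ≤ Pprod q N := by
      rw [show p = 1 - q from by rw [hqdef, hpdef]; ring]
      exact Pp_le_Pq hq0.le hq2 N (by omega)
    have hxp : (0:ℝ) ≤ x^(N+1) := by positivity
    gcongr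
  have hbc : ∑ k ∈ range (N+1), bCoef α k * x^k =
      (∑ k ∈ range (N+1), genBinom α k * x^k)
      - (∑ k ∈ range (N+1), genBinom q k * (-x)^k)
      - (∑ k ∈ range (N+1), genBinom p k * x^k) := by
    rw [← Finset.sum_sub_distrib, ← Finset.sum_sub_distrib]
    apply Finset.sum_congr rfl
    intro k _
    simp only [bCoef]
    rw [← hqdef, ← hpdef, neg_pow]
    ring
  have final : ∑ k ∈ range (N+1), bCoef α k * x^k ≤ (1+x)^α - (1-x)^q - (1+x)^p := by
    rw [hbc]; linarith [hga, hgq, hgp, hPpq]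
  rw [h2] at final
  linarith [h1, final]

lemma amgm (a b t : ℝ) (ht : 0 < t) : (1-t)*a^2 + (1-1/t)*b^2 ≤ (a-b)^2 := by
  have key : (1-t)*a^2 + (1-1/t)*b^2 = (a-b)^2 - (t*a-b)^2/t := by
    field_simp
    ring
  have h2 : 0 ≤ (t*a-b)^2/t := div_nonneg (sq_nonneg _) ht.le
  linarith

/-- Corollary 2.5: improved weighted discrete Hardy inequality, with all the
coefficients `b_k(α)` non-negative. -/
theorem discrete_weighted_hardy_improved (α : ℝ)
    (hα : α ∈ Set.Ico (1 / 3 : ℝ) 1 ∪ {0})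
    (u : ℕ → ℝ) (hsupp : ∃ N : ℕ, ∀ n ≥ N, u n = 0) (h0 : u 0 = 0) :
    (∀ k : ℕ, 3 ≤ k → 0 ≤ bCoef α k) ∧
    ∑' n : ℕ, |u (n + 1) - u n| ^ 2 * ((n : ℝ) + 1) ^ α ≥
      (α - 1) ^ 2 / 4 * ∑' n : ℕ, |u (n + 1)| ^ 2 * ((n : ℝ) + 1) ^ (α - 2) +
      ∑' k : ℕ, bCoef α (k + 3) *
        ∑' n : ℕ, |u (n + 2)| ^ 2 * ((n : ℝ) + 2) ^ (α - ((k : ℝ) + 3)) := by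
  refine ⟨bCoef_nonneg hα, ?_⟩
  -- basic facts
  have hα01 : 0 ≤ α ∧ α < 1 := by
    rcases hα with h | h
    · exact ⟨by linarith [h.1], h.2⟩
    · simp only [Set.mem_singleton_iff] at h; subst h; norm_num
  obtain ⟨hα0, hα1⟩ := hα01
  set q : ℝ := (1 - α) / 2 with hqdef
  have hq0 : 0 < q := by rw [hqdef]; linarith
  have hq2 : q ≤ 1/2 := by rw [hqdef]; linarith
  have hq4 : (α - 1)^2/4 = q^2 := by rw [hqdef]; ring
  obtain ⟨N₀, hN₀⟩ := hsupp
  set N : ℕ := N₀ + 1 with hNdef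
  have hNu : ∀ n, N ≤ n → u n = 0 := fun n hn => hN₀ n (by omega)
  -- convert tsums over n to finite sums
  have ht1 : ∑' n : ℕ, |u (n + 1) - u n| ^ 2 * ((n : ℝ) + 1) ^ α
      = ∑ n ∈ range N, (u (n + 1) - u n) ^ 2 * ((n : ℝ) + 1) ^ α := by
    rw [tsum_eq_sum (s := range N) ?_]
    · exact Finset.sum_congr rfl fun n _ => by rw [sq_abs]
    · intro n hn
      rw [mem_range, not_lt] at hn
      rw [hN₀ n (by omega), hN₀ (n+1) (by omega)]
      simp
  have ht2 : ∑' n : ℕ, |u (n + 1)| ^ 2 * ((n : ℝ) + 1) ^ (α - 2)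
      = ∑ n ∈ range N, u (n + 1) ^ 2 * ((n : ℝ) + 1) ^ (α - 2) := by
    rw [tsum_eq_sum (s := range N) ?_]
    · exact Finset.sum_congr rfl fun n _ => by rw [sq_abs]
    · intro n hn
      rw [mem_range, not_lt] at hn
      rw [hN₀ (n+1) (by omega)]
      simp
  have ht3 : ∀ k : ℕ, ∑' n : ℕ, |u (n + 2)| ^ 2 * ((n : ℝ) + 2) ^ (α - ((k:ℝ) + 3))
      = ∑ n ∈ range N, u (n + 2) ^ 2 * ((n : ℝ) + 2) ^ (α - ((k:ℝ) + 3)) := by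
    intro k
    rw [tsum_eq_sum (s := range N) ?_]
    · exact Finset.sum_congr rfl fun n _ => by rw [sq_abs]
    · intro n hn
      rw [mem_range, not_lt] at hn
      rw [hN₀ (n+2) (by omega)]
      simp
  rw [ht1, ht2]
  simp only [ht3]
  -- the ground-state weight function
  set VV : ℕ → ℝ := fun n => ((n:ℝ)+1)^α * (1 - ((n:ℝ)/((n:ℝ)+1))^q)
      + ((n:ℝ)+1+1)^α * (1 - (((n:ℝ)+1+1)/((n:ℝ)+1))^q) with hVV
  -- Step A
  have stepA : ∑ n ∈ range N, (u (n + 1) - u n) ^ 2 * ((n : ℝ) + 1) ^ α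
      ≥ ∑ n ∈ range N, VV n * u (n + 1) ^ 2 := by
    set w : ℕ → ℝ := fun n => ((n:ℝ)+1)^α * (1 - (((n:ℝ)+1)/(n:ℝ))^q) * u n ^ 2 with hw
    have hpt : ∀ n ∈ range N,
        ((n:ℝ)+1)^α * (1 - ((n:ℝ)/((n:ℝ)+1))^q) * u (n+1) ^ 2 + w n
        ≤ (u (n + 1) - u n) ^ 2 * ((n : ℝ) + 1) ^ α := by
      intro n _
      rcases Nat.eq_zero_or_pos n with rfl | hn
      · simp only [hw, h0]
        norm_num
        rw [Real.zero_rpow hq0.ne']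
        norm_num
      · have hnp : (0:ℝ) < n := by exact_mod_cast hn
        set t : ℝ := ((n:ℝ)/((n:ℝ)+1))^q with htdef
        have ht0 : 0 < t := Real.rpow_pos_of_pos (by positivity) q
        have hinv : (((n:ℝ)+1)/(n:ℝ))^q = 1/t := by
          rw [htdef, one_div, ← Real.inv_rpow (by positivity : (0:ℝ) ≤ (n:ℝ)/((n:ℝ)+1)),
            inv_div]
        rw [hw]
        simp only
        rw [hinv]
        have hamgm := amgm (u (n+1)) (u n) t ht0
        have hwpos : (0:ℝ) ≤ ((n:ℝ)+1)^α := Real.rpow_nonneg (by positivity) α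
        nlinarith [mul_le_mul_of_nonneg_left hamgm hwpos]
    have hsum1 := Finset.sum_le_sum hpt
    have hshift : ∑ n ∈ range N, w n = ∑ n ∈ range N, w (n+1) := by
      rw [hNdef, Finset.sum_range_succ', Finset.sum_range_succ]
      have hw0 : w 0 = 0 := by simp [hw, h0]
      have hwN : w (N₀+1) = 0 := by simp [hw, hN₀ (N₀+1) (by omega)]
      rw [hw0, hwN]
    have hsplit : ∑ n ∈ range N,
        (((n:ℝ)+1)^α * (1 - ((n:ℝ)/((n:ℝ)+1))^q) * u (n+1) ^ 2 + w n)
        = ∑ n ∈ range N, VV n * u (n+1) ^ 2 := by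
      rw [Finset.sum_add_distrib, hshift, ← Finset.sum_add_distrib]
      apply Finset.sum_congr rfl
      intro n _
      simp only [hw, hVV]
      push_cast
      ring
    rw [← hsplit]
    exact hsum1
  -- V(1) ≥ q²
  have hV1 : q^2 ≤ VV 0 := by
    have e0 : VV 0 = 1 + (2:ℝ)^α - (2:ℝ)^(α+q) := by
      simp only [hVV, Nat.cast_zero, zero_add, zero_div]
      rw [Real.zero_rpow hq0.ne', Real.one_rpow]
      rw [show ((1:ℝ)+1)/1 = 2 from by norm_num, show ((1:ℝ)+1) = 2 from by norm_num]
      rw [Real.rpow_add two_pos]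
      ring
    rw [e0]
    have hy : (2:ℝ)^(α+q) * (2:ℝ)^(α+q) = 2 * (2:ℝ)^α := by
      rw [← Real.rpow_add two_pos]
      rw [show α + q + (α + q) = 1 + α from by rw [hqdef]; ring]
      rw [Real.rpow_add two_pos, Real.rpow_one]
    nlinarith [sq_nonneg ((2:ℝ)^(α+q) - 1), hq0, hq2, hy]
  -- per-m core inequality
  have coreM : ∀ n : ℕ, ∀ K : ℕ,
      ∑ k ∈ range K, bCoef α (k+3) * ((n:ℝ)+2)^(α-((k:ℝ)+3))
        ≤ VV (n+1) - q^2 * ((n:ℝ)+2)^(α-2) := by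
    intro n K
    set m : ℝ := (n:ℝ) + 2 with hm
    have hm2 : (2:ℝ) ≤ m := by
      rw [hm]; have : (0:ℝ) ≤ n := Nat.cast_nonneg n; linarith
    have hm0 : (0:ℝ) < m := by linarith
    have hx0 : 0 < 1/m := by positivity
    have hx1 : 1/m < 1 := by rw [div_lt_one hm0]; linarith
    have hmα : 0 < m^α := Real.rpow_pos_of_pos hm0 α
    have hcs := core_series hα hx0 hx1 K
    have hmul := mul_le_mul_of_nonneg_left hcs hmα.le
    have hL : m^α * (∑ k ∈ range K, bCoef α (k+3) * (1/m)^(k+3))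
        = ∑ k ∈ range K, bCoef α (k+3) * m^(α-((k:ℝ)+3)) := by
      rw [Finset.mul_sum]
      apply Finset.sum_congr rfl
      intro k _
      have he : m^(α-((k:ℝ)+3)) = m^α * (1/m)^(k+3) := by
        rw [Real.rpow_sub hm0]
        rw [show ((k:ℝ)+3) = ((k+3 : ℕ):ℝ) from by push_cast; ring]
        rw [Real.rpow_natCast, div_pow, one_pow]
        ring
      rw [he]; ring
    rw [hL] at hmul
    have h1p : (0:ℝ) < 1 + 1/m := by linarith
    have e1 : m^α * (1+1/m)^α = (m+1)^α := by
      rw [← Real.mul_rpow hm0.le h1p.le]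
      congr 1
      field_simp
    have e2 : ((1:ℝ) - 1/m) = (m-1)/m := by field_simp
    have e4 : (1:ℝ)+1/m = (m+1)/m := by field_simp
    have e3 : m^α * (1+1/m)^((1+α)/2) = (m+1)^α * ((m+1)/m)^q := by
      rw [show ((1:ℝ)+α)/2 = α + q from by rw [hqdef]; ring, Real.rpow_add h1p,
        ← mul_assoc, e1, e4]
    have e5 : m^α * (1/m)^2 = m^(α-2) := by
      rw [Real.rpow_sub hm0, div_pow, one_pow]
      rw [show (2:ℝ) = ((2:ℕ):ℝ) from by norm_num, Real.rpow_natCast]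
      ring
    have eVV : VV (n+1) = m^α * (1 - ((m-1)/m)^q) + (m+1)^α * (1 - ((m+1)/m)^q) := by
      simp only [hVV, hm]
      push_cast
      ring_nf
    have efinal : m^α * ((1 + (1+1/m)^α - (1-1/m)^((1-α)/2) - (1+1/m)^((1+α)/2))
          - ((1-α)/2)^2 * (1/m)^2) = VV (n+1) - q^2 * m^(α-2) := by
      rw [← hqdef, eVV, e2]
      linear_combination e1 - e3 - q^2 * e5
    rw [efinal] at hmul
    exact hmul
  -- tsum bound
  have key : (∑' k : ℕ, bCoef α (k + 3) *
      ∑ n ∈ range N, u (n + 2) ^ 2 * ((n:ℝ) + 2) ^ (α - ((k:ℝ) + 3)))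
      ≤ (∑ n ∈ range N, VV n * u (n + 1) ^ 2)
        - q^2 * ∑ n ∈ range N, u (n + 1) ^ 2 * ((n:ℝ) + 1) ^ (α - 2) := by
    apply Real.tsum_le_of_sum_range_le
    · intro k
      apply mul_nonneg (bCoef_nonneg hα (k+3) (by omega))
      apply Finset.sum_nonneg
      intro n _
      positivity
    intro K
    have hswap : ∑ k ∈ range K, bCoef α (k+3) *
          ∑ n ∈ range N, u (n + 2) ^ 2 * ((n:ℝ) + 2) ^ (α - ((k:ℝ) + 3))
        = ∑ n ∈ range N, u (n + 2) ^ 2 *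
            ∑ k ∈ range K, bCoef α (k+3) * ((n:ℝ) + 2) ^ (α - ((k:ℝ) + 3)) := by
      simp only [Finset.mul_sum]
      rw [Finset.sum_comm]
      apply Finset.sum_congr rfl; intro n _
      apply Finset.sum_congr rfl; intro k _
      ring
    rw [hswap]
    have hbound : ∀ n ∈ range N, u (n + 2) ^ 2 *
          ∑ k ∈ range K, bCoef α (k+3) * ((n:ℝ) + 2) ^ (α - ((k:ℝ) + 3))
        ≤ (VV (n+1) - q^2 * ((n:ℝ)+2)^(α-2)) * u (n+2)^2 := by
      intro n _
      rw [mul_comm]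
      exact mul_le_mul_of_nonneg_right (coreM n K) (sq_nonneg _)
    have h1 := Finset.sum_le_sum hbound
    set h : ℕ → ℝ := fun n => (VV n - q^2 * ((n:ℝ)+1)^(α-2)) * u (n+1)^2 with hh
    have hcast : ∀ n : ℕ, (VV (n+1) - q^2 * ((n:ℝ)+2)^(α-2)) * u (n+2)^2 = h (n+1) := by
      intro n
      simp only [hh]
      push_cast
      ring_nf
    have h2 : ∑ n ∈ range N, (VV (n+1) - q^2 * ((n:ℝ)+2)^(α-2)) * u (n+2)^2
        = ∑ n ∈ range N₀, h (n+1) := by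
      rw [Finset.sum_congr rfl (fun n _ => hcast n)]
      rw [hNdef, Finset.sum_range_succ]
      have hz : h (N₀+1) = 0 := by
        simp only [hh]
        rw [hN₀ (N₀+2) (by omega)]
        ring
      rw [hz, add_zero]
    have h3 : ∑ n ∈ range N, h n = h 0 + ∑ n ∈ range N₀, h (n+1) := by
      rw [hNdef, Finset.sum_range_succ']
      ring
    have h0pos : 0 ≤ h 0 := by
      simp only [hh]
      apply mul_nonneg _ (sq_nonneg _)
      rw [Nat.cast_zero, zero_add, Real.one_rpow]
      linarith [hV1]
    have h4 : (∑ n ∈ range N, VV n * u (n + 1) ^ 2)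
        - q^2 * ∑ n ∈ range N, u (n + 1) ^ 2 * ((n:ℝ) + 1) ^ (α - 2)
        = ∑ n ∈ range N, h n := by
      rw [Finset.mul_sum, ← Finset.sum_sub_distrib]
      apply Finset.sum_congr rfl; intro n _
      simp only [hh]
      ring
    rw [h4, h3]
    linarith [h1, h2, h0pos]
  rw [hq4]
  linarith [stepA, key]
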